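/- Let a_k, b_k be a bounded Bregman alternating sequence with D(b_k, a_k) → ½(r*)² and D(b_{k-1}, a_k) → ½(r*)². Suppose on a neighborhood of the set of accumulation point pairs, every rl-building block satisfies the three-point inequality D(b, a⁺) ≥ D(b⁺, a⁺) + ℓ D(b, b⁺) with fixed ℓ ∈ (0,1). Then b_{k-1} - b_k → 0. -/

import Mathlib

open scoped RealInnerProductSpace
open Filter

section AuxLemmas

open Set Topology

variable {E : Type*} [NormedAddCommGroup E] [InnerProductSpace ℝ E] [CompleteSpace E]

open scoped RealInnerProductSpace
open Filter Set Topology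

variable {E : Type*} [NormedAddCommGroup E] [InnerProductSpace ℝ E] [CompleteSpace E]

/-- tangent line inequality for convex functions with a gradient -/
lemma tangent_le_of_convexOn {f : E → ℝ} {G : Set E}
    (hconv : ConvexOn ℝ G f) {x y g : E} (hx : x ∈ G) (hy : y ∈ G)
    (hg : HasGradientAt f g y) : f y + ⟪g, x - y⟫ ≤ f x := by
  have hline : HasDerivAt (fun t : ℝ => y + t • (x - y)) (x - y) 0 := by
    simpa using ((hasDerivAt_id (0:ℝ)).smul_const (x - y)).const_add y
  have hF : HasFDerivAt f (InnerProductSpace.toDual ℝ E g) y :=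
    hasGradientAt_iff_hasFDerivAt.mp hg
  have hψ : HasDerivAt (fun t : ℝ => f (y + t • (x - y))) ⟪g, x - y⟫ 0 := by
    have hF' : HasFDerivAt f (InnerProductSpace.toDual ℝ E g) ((0:ℝ) • (x - y) + y) := by
      simpa using hF
    have hline' : HasDerivAt (fun t : ℝ => t • (x - y) + y) (x - y) 0 := by
      simpa using ((hasDerivAt_id (0:ℝ)).smul_const (x - y)).add_const y
    have := hF'.comp_hasDerivAt (0:ℝ) hline'
    simpa [InnerProductSpace.toDual_apply_apply, add_comm, Function.comp_def] using this
  have hslope : Tendsto (slope (fun t : ℝ => f (y + t • (x - y))) 0) (𝓝[>] 0)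
      (𝓝 ⟪g, x - y⟫) :=
    (hasDerivAt_iff_tendsto_slope.mp hψ).mono_left
      (nhdsWithin_mono 0 (fun t ht => ne_of_gt ht))
  have hbound : ∀ᶠ t in 𝓝[>] (0:ℝ),
      slope (fun t : ℝ => f (y + t • (x - y))) 0 t ≤ f x - f y := by
    filter_upwards [Ioo_mem_nhdsGT (zero_lt_one)] with t ht
    have hmem : y + t • (x - y) = (1 - t) • y + t • x := by module
    have hcv := hconv.2 hy hx (by linarith [ht.2] : (0:ℝ) ≤ 1 - t) ht.1.le (by ring)
    rw [slope_def_field]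
    have h1 : f (y + t • (x - y)) ≤ (1 - t) * f y + t * f x := by
      rw [hmem]; simpa [smul_eq_mul] using hcv
    simp only [zero_smul, add_zero, sub_zero] at h1 ⊢
    rw [div_le_iff₀ ht.1]
    nlinarith [h1]
  have := le_of_tendsto hslope hbound
  linarith

/-- strict tangent line inequality for strictly convex functions -/
lemma tangent_lt_of_strictConvexOn {f : E → ℝ} {G : Set E}
    (hGconv : Convex ℝ G) (hstrict : StrictConvexOn ℝ G f) {x y g : E}
    (hx : x ∈ G) (hy : y ∈ G) (hxy : x ≠ y)
    (hg : HasGradientAt f g y) : f y + ⟪g, x - y⟫ < f x := by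
  set m := (1/2 : ℝ) • x + (1/2 : ℝ) • y with hm
  have hmG : m ∈ G := hGconv hx hy (by norm_num) (by norm_num) (by norm_num)
  have h1 : f y + ⟪g, m - y⟫ ≤ f m :=
    tangent_le_of_convexOn hstrict.convexOn hmG hy hg
  have h2 : f m < (1/2 : ℝ) * f x + (1/2 : ℝ) * f y := by
    have := hstrict.2 hx hy hxy (by norm_num : (0:ℝ) < 1/2)
      (by norm_num : (0:ℝ) < 1/2) (by norm_num : (1/2:ℝ) + 1/2 = 1)
    simpa [hm, smul_eq_mul] using this
  have h3 : m - y = (1/2 : ℝ) • (x - y) := by rw [hm]; module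
  have h4 : ⟪g, m - y⟫ = (1/2 : ℝ) * ⟪g, x - y⟫ := by
    rw [h3, real_inner_smul_right]
  linarith [h1, h2, h4.symm.le]

end AuxLemmas

set_option maxHeartbeats 1600000 in
/-- If a bounded Bregman alternating sequence has value convergence to `½(r*)²` and the
rl-three-point inequality holds with a fixed `ℓ ∈ (0,1)` on a neighborhood of the set of
accumulation point pairs, then consecutive `b`-iterates tighten: `b_{k} - b_{k+1} → 0`. -/
theorem alternating_bregman_successive_gap_vanishes {d : ℕ}
    (f : EuclideanSpace ℝ (Fin d) → ℝ)
    (f' : EuclideanSpace ℝ (Fin d) → EuclideanSpace ℝ (Fin d))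
    (G : Set (EuclideanSpace ℝ (Fin d))) (hG : IsOpen G) (hGconv : Convex ℝ G)
    (hsmooth : ContDiffOn ℝ 2 f G) (hstrict : StrictConvexOn ℝ G f)
    (hgrad : ∀ w ∈ G, HasGradientAt f (f' w) w)
    (A B : Set (EuclideanSpace ℝ (Fin d)))
    (D : EuclideanSpace ℝ (Fin d) → EuclideanSpace ℝ (Fin d) → ℝ)
    (hD : ∀ x y, D x y = f x - f y - ⟪f' y, x - y⟫)
    (K : Set (EuclideanSpace ℝ (Fin d))) (hK : IsCompact K) (hKG : K ⊆ G)
    (hAK : A ⊆ K) (hBK : B ⊆ K)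
    (a b : ℕ → EuclideanSpace ℝ (Fin d))
    (hbk : ∀ k, b k ∈ B ∧ ∀ b' ∈ B, D (b k) (a k) ≤ D b' (a k))
    (hak : ∀ k, a (k + 1) ∈ A ∧ ∀ a' ∈ A, D (b k) (a (k + 1)) ≤ D (b k) a')
    (rstar : ℝ)
    (hval1 : Tendsto (fun k => D (b k) (a k)) atTop (nhds (rstar ^ 2 / 2)))
    (hval2 : Tendsto (fun k => D (b k) (a (k + 1))) atTop (nhds (rstar ^ 2 / 2)))
    (ℓ : ℝ) (hℓ0 : 0 < ℓ) (hℓ1 : ℓ < 1)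
    (U : Set (EuclideanSpace ℝ (Fin d) × EuclideanSpace ℝ (Fin d)))
    (hUopen : IsOpen U)
    (hUacc : {p | MapClusterPt p atTop (fun k => (b (k + 1), a (k + 1)))} ⊆ U)
    (h3pt : ∀ k, (b (k + 1), a (k + 1)) ∈ U →
      D (b k) (a (k + 1)) ≥ D (b (k + 1)) (a (k + 1)) + ℓ * D (b k) (b (k + 1))) :
    Tendsto (fun k => b k - b (k + 1)) atTop (nhds 0) := by
  have hbKmem : ∀ k, b k ∈ K := fun k => hBK (hbk k).1
  have haK : ∀ k, a (k + 1) ∈ K := fun k => hAK (hak k).1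
  have hbG : ∀ k, b k ∈ G := fun k => hKG (hbKmem k)
  -- nonnegativity and strict positivity of D on G
  have hDnonneg : ∀ x ∈ G, ∀ y ∈ G, 0 ≤ D x y := by
    intro x hx y hy
    rw [hD]
    have := tangent_le_of_convexOn hstrict.convexOn hx hy (hgrad y hy)
    linarith
  have hDpos : ∀ x ∈ G, ∀ y ∈ G, x ≠ y → 0 < D x y := by
    intro x hx y hy hxy
    rw [hD]
    have := tangent_lt_of_strictConvexOn hGconv hstrict hx hy hxy (hgrad y hy)
    linarith
  -- continuity of D on G ×ˢ G
  have hf'eq : Set.EqOn f'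
      (fun w => (InnerProductSpace.toDual ℝ (EuclideanSpace ℝ (Fin d))).symm (fderiv ℝ f w)) G := by
    intro w hw
    show f' w = (InnerProductSpace.toDual ℝ (EuclideanSpace ℝ (Fin d))).symm (fderiv ℝ f w)
    rw [(hasGradientAt_iff_hasFDerivAt.mp (hgrad w hw)).fderiv]
    simp
  have hf'cont : ContinuousOn f' G := by
    have h1 := hsmooth.continuousOn_fderiv_of_isOpen hG (by norm_num : (1 : WithTop ℕ∞) ≤ 2)
    exact (((InnerProductSpace.toDual ℝ
      (EuclideanSpace ℝ (Fin d))).symm.continuous.comp_continuousOn h1)).congr hf'eq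
  have hDcont : ContinuousOn (fun p :
      EuclideanSpace ℝ (Fin d) × EuclideanSpace ℝ (Fin d) => D p.1 p.2) (G ×ˢ G) := by
    have hfc : ContinuousOn f G := hsmooth.continuousOn
    have h1 : ContinuousOn (fun p :
        EuclideanSpace ℝ (Fin d) × EuclideanSpace ℝ (Fin d) => f p.1) (G ×ˢ G) :=
      hfc.comp continuousOn_fst (fun p hp => hp.1)
    have h2 : ContinuousOn (fun p :
        EuclideanSpace ℝ (Fin d) × EuclideanSpace ℝ (Fin d) => f p.2) (G ×ˢ G) :=
      hfc.comp continuousOn_snd (fun p hp => hp.2)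
    have h3 : ContinuousOn (fun p :
        EuclideanSpace ℝ (Fin d) × EuclideanSpace ℝ (Fin d) =>
        (⟪f' p.2, p.1 - p.2⟫ : ℝ)) (G ×ˢ G) :=
      ContinuousOn.inner (hf'cont.comp continuousOn_snd (fun p hp => hp.2))
        ((continuous_fst.sub continuous_snd).continuousOn)
    exact ((h1.sub h2).sub h3).congr (fun p hp => by rw [hD]; rfl)
  -- eventually the pairs are in U
  have hUev : ∀ᶠ k in atTop, (b (k + 1), a (k + 1)) ∈ U := by
    by_contra hcon
    rw [not_eventually] at hcon
    have hC : IsCompact ((K ×ˢ K) \ U) := (hK.prod hK).diff hUopen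
    haveI hne : (atTop ⊓ 𝓟 {k : ℕ | ¬ (b (k + 1), a (k + 1)) ∈ U}).NeBot :=
      frequently_iff_neBot.mp hcon
    have hmem : ∀ᶠ k in atTop ⊓ 𝓟 {k : ℕ | ¬ (b (k + 1), a (k + 1)) ∈ U},
        (b (k + 1), a (k + 1)) ∈ (K ×ˢ K) \ U := by
      rw [eventually_inf_principal]
      exact Eventually.of_forall fun k hk => ⟨⟨hbKmem (k + 1), haK k⟩, hk⟩
    obtain ⟨x, hxC, hx⟩ := hC.exists_mapClusterPt (le_principal_iff.2 (Filter.mem_map.mpr hmem))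
    exact hxC.2 (hUacc (hx.mono inf_le_left))
  -- the Bregman gap between consecutive b's tends to zero
  have hsh : Tendsto (fun k => D (b (k + 1)) (a (k + 1))) atTop (nhds (rstar ^ 2 / 2)) :=
    (tendsto_add_atTop_iff_nat 1).mpr hval1
  have hdiff : Tendsto (fun k => D (b k) (a (k + 1)) - D (b (k + 1)) (a (k + 1))) atTop
      (nhds 0) := by
    simpa using hval2.sub hsh
  have hDb0 : Tendsto (fun k => D (b k) (b (k + 1))) atTop (nhds 0) := by
    have hup : ∀ᶠ k in atTop, D (b k) (b (k + 1)) ≤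
        (D (b k) (a (k + 1)) - D (b (k + 1)) (a (k + 1))) / ℓ := by
      filter_upwards [hUev] with k hk
      rw [le_div_iff₀ hℓ0]
      nlinarith [h3pt k hk]
    have hlow : ∀ᶠ k in atTop, (0 : ℝ) ≤ D (b k) (b (k + 1)) :=
      Eventually.of_forall fun k => hDnonneg _ (hbG k) _ (hbG (k + 1))
    have hupT : Tendsto (fun k => (D (b k) (a (k + 1)) - D (b (k + 1)) (a (k + 1))) / ℓ) atTop
        (nhds 0) := by
      simpa using hdiff.div_const ℓ
    exact tendsto_of_tendsto_of_tendsto_of_le_of_le' tendsto_const_nhds hupT hlow hup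
  -- conclude by compactness
  by_contra hcon
  rw [Metric.tendsto_atTop] at hcon
  push_neg at hcon
  obtain ⟨ε, hε, hfreq⟩ := hcon
  obtain ⟨φ, hφmono, hφ⟩ := Filter.extraction_of_frequently_atTop
    (Filter.frequently_atTop.mpr hfreq)
  obtain ⟨q, hqK, ψ, hψmono, hψ⟩ := (hK.prod hK).tendsto_subseq
    (x := fun n => (b (φ n), b (φ n + 1))) (fun n => ⟨hbKmem _, hbKmem _⟩)
  have hq1G : q.1 ∈ G := hKG hqK.1
  have hq2G : q.2 ∈ G := hKG hqK.2
  have hpair : Tendsto (fun n => (b (φ (ψ n)), b (φ (ψ n) + 1))) atTop (nhds q) := hψ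
  have hDlim : Tendsto (fun n => D (b (φ (ψ n))) (b (φ (ψ n) + 1))) atTop
      (nhds (D q.1 q.2)) := by
    have hct : ContinuousAt (fun p :
        EuclideanSpace ℝ (Fin d) × EuclideanSpace ℝ (Fin d) => D p.1 p.2) q :=
      hDcont.continuousAt ((hG.prod hG).mem_nhds ⟨hq1G, hq2G⟩)
    exact hct.tendsto.comp hpair
  have hDlim0 : Tendsto (fun n => D (b (φ (ψ n))) (b (φ (ψ n) + 1))) atTop (nhds 0) :=
    hDb0.comp ((hφmono.comp hψmono).tendsto_atTop)
  have hDq : D q.1 q.2 = 0 := tendsto_nhds_unique hDlim hDlim0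
  have hb1 : Tendsto (fun n => b (φ (ψ n))) atTop (nhds q.1) :=
    (continuousAt_fst.tendsto).comp hpair
  have hb2 : Tendsto (fun n => b (φ (ψ n) + 1)) atTop (nhds q.2) :=
    (continuousAt_snd.tendsto).comp hpair
  have hnorm : Tendsto (fun n => ‖b (φ (ψ n)) - b (φ (ψ n) + 1)‖) atTop
      (nhds ‖q.1 - q.2‖) := (hb1.sub hb2).norm
  have hεle : ε ≤ ‖q.1 - q.2‖ := by
    refine ge_of_tendsto hnorm (Eventually.of_forall fun n => ?_)
    have := hφ (ψ n)
    rwa [dist_zero_right] at this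
  have hqne : q.1 ≠ q.2 := by
    intro h
    rw [h, sub_self, norm_zero] at hεle
    linarith
  have := hDpos q.1 hq1G q.2 hq2G hqne
  linarith
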